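/- Let B be a smooth projective curve of genus g, F a very ample rank 3 vector bundle of degree d ≥ 3 on B, X = P(F) with hyperplane class H = ξ and fiber class F_0, and W ⊂ X a smooth surface with W ≡ aξ + bF_0 that is a P^1-bundle p: W → C with fiber f satisfying H·f = 1. If f·F_0 = 0 then a = 1; if f·F_0 ≥ 1 then b = -a, d = 3, and g = 0. -/
import Mathlib

/-- Numerics on `X = P(F)`, `F` very ample of rank `3` and degree `d ≥ 3` on a
smooth curve `B` of genus `g ≥ 0`, with hyperplane class `H = ξ` and fiber
class `F₀`, and a smooth surface `W ≡ aξ + bF₀` which is a `P¹`-bundle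
`p : W → C` with fiber `f` such that `H·f = ξ·f = 1` and `f·F₀ = t ≥ 0`.
Adjunction (`K_X ≡ -3ξ + (2g-2+d)F₀` and `f·K_W = f·(K_X + W) = -2`, using
`ξ·f = 1`) reads `a - 3 + (2g - 2 + d + b)·t = -2`, and `W·f = a + b·t ≥ 0`
since `f ⊄ W`.  Then: if `t = 0` then `a = 1`; if `t ≥ 1` then `b = -a`,
`d = 3` and `g = 0`. -/
theorem fiber_intersection_numerics (a b d g t : ℤ)
    (ht : 0 ≤ t) (hd : 3 ≤ d) (hg : 0 ≤ g)
    (adjunction : a - 3 + (2 * g - 2 + d + b) * t = -2)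
    (Wf_nonneg : 0 ≤ a + b * t) :
    (t = 0 → a = 1) ∧ (1 ≤ t → b = -a ∧ d = 3 ∧ g = 0) := by
  constructor
  · intro h; subst h; linarith
  · intro h1
    -- a + b*t = 1 - (2g-2+d)*t
    have key : a + b * t + (2 * g - 2 + d) * t = 1 := by ring_nf; ring_nf at adjunction; linarith
    have hfac : (1 : ℤ) ≤ 2 * g - 2 + d := by linarith
    have h2 : (2 * g - 2 + d) * t ≤ 1 := by linarith
    have h3 : (1:ℤ) * t ≤ (2 * g - 2 + d) * t := by
      apply mul_le_mul_of_nonneg_right hfac ht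
    have ht1 : t = 1 := by nlinarith
    subst ht1
    have : 2 * g - 2 + d = 1 := by nlinarith
    constructor
    · linarith
    constructor <;> omega
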